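/- Let G(T) be a connected threshold graph on {1,…,n} (n ≥ 2) with construction sequence T and Laplacian matrix L. Let W ⊆ {1,…,n} be a set containing exactly one vertex of each distinct degree value (i.e., for every value δ in {d(1),…,d(n)} there is exactly one w ∈ W with d(w) = δ), and let S = {1,…,n} \ W be the set of control nodes. Then for every real number λ and every nonzero vector v ∈ ℝ^n with L·v = λ·v, there exists j ∈ S with v_j ≠ 0. (By the PBH test, the Laplacian network with control nodes S is controllable.) -/

import Mathlib

open Finset Matrix Polynomial

/-- The threshold graph on `Fin n` (vertex `i` of the paper corresponds to `⟨i-1, _⟩ : Fin n`)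
with construction sequence `T` : two distinct vertices are adjacent iff the later one
(in the construction order) was added by a join operation. -/
def thresholdGraph (n : ℕ) (T : Fin n → Bool) : SimpleGraph (Fin n) where
  Adj i j := i ≠ j ∧ T (max i j) = true
  symm := by
    refine ⟨fun i j h => ?_⟩
    exact ⟨h.1.symm, by rw [max_comm]; exact h.2⟩
  loopless := by
    refine ⟨fun i h => ?_⟩
    exact h.1 rfl

instance thresholdGraph.instDecidableRelAdj (n : ℕ) (T : Fin n → Bool) :
    DecidableRel (thresholdGraph n T).Adj :=
  fun i j => decidable_of_iff (i ≠ j ∧ T (max i j) = true) Iff.rfl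

namespace ThGAux

lemma tg_adj {n : ℕ} (T : Fin n → Bool) (i j : Fin n) :
    (thresholdGraph n T).Adj i j ↔ i ≠ j ∧ T (max i j) = true := Iff.rfl

lemma tg_lap_apply {n : ℕ} (T : Fin n → Bool) (v : Fin n → ℝ) (i : Fin n) :
    ((thresholdGraph n T).lapMatrix ℝ *ᵥ v) i
      = ((thresholdGraph n T).degree i : ℝ) * v i
        - ∑ j ∈ (thresholdGraph n T).neighborFinset i, v j :=
  SimpleGraph.lapMatrix_mulVec_apply _ _ _

lemma sum_lap_mulVec {n : ℕ} (G : SimpleGraph (Fin n)) [DecidableRel G.Adj] (v : Fin n → ℝ) :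
    ∑ i, (G.lapMatrix ℝ *ᵥ v) i = 0 := by
  have hz : ∀ j, ∑ i, G.lapMatrix ℝ i j = 0 := by
    intro j
    have h := congrFun (G.lapMatrix_mulVec_const_eq_zero (R := ℝ)) j
    simp only [mulVec, dotProduct, mul_one, Pi.zero_apply] at h
    calc ∑ i, G.lapMatrix ℝ i j = ∑ i, G.lapMatrix ℝ j i :=
          Finset.sum_congr rfl fun i _ => (G.isSymm_lapMatrix ℝ).apply j i
      _ = 0 := h
  calc ∑ i, (G.lapMatrix ℝ *ᵥ v) i = ∑ j, (∑ i, G.lapMatrix ℝ i j) * v j := by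
        simp only [mulVec, dotProduct, Finset.sum_mul]
        exact Finset.sum_comm
    _ = 0 := by simp [hz]

lemma reach_of_lt {n : ℕ} (T : Fin n → Bool) {i j : Fin n} (hij : i < j)
    (hj : ∃ k, (thresholdGraph n T).Adj j k) :
    (thresholdGraph n T).Reachable i j := by
  obtain ⟨k, hne, hT⟩ := hj
  have hT0 := hT
  rcases max_cases j k with ⟨hm, _⟩ | ⟨hm, hlt⟩
  · rw [hm] at hT
    exact (SimpleGraph.Adj.reachable (⟨hij.ne, by rw [max_eq_right hij.le]; exact hT⟩ :
      (thresholdGraph n T).Adj i j))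
  · rw [hm] at hT
    have h1 : (thresholdGraph n T).Adj i k :=
      ⟨(hij.trans hlt).ne, by rw [max_eq_right (hij.trans hlt).le]; exact hT⟩
    have h2 : (thresholdGraph n T).Adj j k := ⟨hne, hT0⟩
    exact h1.reachable.trans h2.reachable.symm

lemma ker_const {n : ℕ} (G : SimpleGraph (Fin n)) [DecidableRel G.Adj] {v : Fin n → ℝ}
    (h : G.lapMatrix ℝ *ᵥ v = 0) : ∀ i j, G.Reachable i j → v i = v j := by
  rw [← SimpleGraph.lapMatrix_mulVec_eq_zero_iff_forall_reachable]
  exact h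

lemma lemA {n : ℕ} (T : Fin n → Bool) (v : Fin n → ℝ) (W : Finset (Fin n))
    (hker : (thresholdGraph n T).lapMatrix ℝ *ᵥ v = 0)
    (hoff : ∀ i, i ∉ W → v i = 0)
    (hinj : ∀ w w', w ∈ W → w' ∈ W →
      (thresholdGraph n T).degree w = (thresholdGraph n T).degree w' → w = w')
    (hsum : ∑ i, v i = 0) : v = 0 := by
  classical
  set G := thresholdGraph n T with hG
  have hcon : ∀ i j, G.Reachable i j → v i = v j := ker_const G hker
  set M : Finset (Fin n) := univ.filter (fun i => 0 < G.degree i) with hM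
  have hMadj : ∀ i, i ∈ M ↔ ∃ k, G.Adj i k := by
    intro i
    simp [hM, SimpleGraph.degree_pos_iff_exists_adj]
  have hconstM : ∀ i j, i ∈ M → j ∈ M → v i = v j := by
    intro i j hi hj
    rcases lt_trichotomy i j with h | h | h
    · exact hcon i j (reach_of_lt T h ((hMadj j).1 hj))
    · rw [h]
    · exact (hcon j i (reach_of_lt T h ((hMadj i).1 hi))).symm
  have hMzero : ∀ i, i ∈ M → v i = 0 := by
    intro i hi
    have hmaps : ∀ a ∈ M, G.degree a ∈ Finset.Icc 1 (M.card - 1) := by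
      intro a ha
      rw [Finset.mem_Icc]
      refine ⟨(Finset.mem_filter.1 ha).2, ?_⟩
      have hsub : G.neighborFinset a ⊆ M.erase a := by
        intro k hk
        rw [SimpleGraph.mem_neighborFinset] at hk
        exact Finset.mem_erase.2 ⟨hk.ne', (hMadj k).2 ⟨a, hk.symm⟩⟩
      have h1 := Finset.card_le_card hsub
      rw [Finset.card_erase_of_mem ha] at h1
      exact h1
    have hlt : (Finset.Icc 1 (M.card - 1)).card < M.card := by
      rw [Nat.card_Icc]
      have : 0 < M.card := Finset.card_pos.2 ⟨i, hi⟩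
      omega
    obtain ⟨a, ha, b, hb, hab, hdeg⟩ :=
      Finset.exists_ne_map_eq_of_card_lt_of_maps_to hlt hmaps
    have hor : a ∉ W ∨ b ∉ W := by
      by_contra h
      push_neg at h
      exact hab (hinj a b h.1 h.2 hdeg)
    rcases hor with h | h
    · exact (hconstM i a hi ha).trans (hoff a h)
    · exact (hconstM i b hi hb).trans (hoff b h)
  by_contra hv
  obtain ⟨i0, hi0⟩ : ∃ i, v i ≠ 0 := by
    by_contra h
    push_neg at h
    exact hv (funext h)
  have hdeg0 : ∀ j, v j ≠ 0 → G.degree j = 0 := by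
    intro j hj
    by_contra h
    exact hj (hMzero j (Finset.mem_filter.2 ⟨Finset.mem_univ _, Nat.pos_of_ne_zero h⟩))
  have hW0 : ∀ j, v j ≠ 0 → j ∈ W := by
    intro j hj
    by_contra h
    exact hj (hoff j h)
  have hsingle : ∀ j, j ≠ i0 → v j = 0 := by
    intro j hj
    by_contra hvj
    exact hj (hinj j i0 (hW0 j hvj) (hW0 i0 hi0) ((hdeg0 j hvj).trans (hdeg0 i0 hi0).symm))
  have : ∑ i, v i = v i0 :=
    Finset.sum_eq_single_of_mem i0 (Finset.mem_univ _) (fun j _ hj => hsingle j hj)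
  exact hi0 (this ▸ hsum)

end ThGAux

namespace ThGAux

lemma castSucc_max {n : ℕ} (i j : Fin n) :
    (max i j).castSucc = max i.castSucc j.castSucc := by
  rcases le_total i j with h | h
  · rw [max_eq_right h, max_eq_right (Fin.castSucc_le_castSucc_iff.2 h)]
  · rw [max_eq_left h, max_eq_left (Fin.castSucc_le_castSucc_iff.2 h)]

lemma adj_castSucc {n : ℕ} (T : Fin (n+1) → Bool) (i j : Fin n) :
    (thresholdGraph n (fun k => T k.castSucc)).Adj i j ↔
      (thresholdGraph (n+1) T).Adj i.castSucc j.castSucc := by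
  rw [tg_adj, tg_adj, ← castSucc_max]
  constructor
  · rintro ⟨h1, h2⟩
    exact ⟨fun h => h1 (Fin.castSucc_inj.1 h), h2⟩
  · rintro ⟨h1, h2⟩
    exact ⟨fun h => h1 (by rw [h]), h2⟩

lemma neighborFinset_castSucc {n : ℕ} (T : Fin (n+1) → Bool) (i : Fin n) :
    (thresholdGraph (n+1) T).neighborFinset i.castSucc
      = (if T (Fin.last n) = true then {Fin.last n} else ∅)
        ∪ ((thresholdGraph n (fun k => T k.castSucc)).neighborFinset i).map
            Fin.castSuccEmb := by
  ext k
  induction k using Fin.lastCases with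
  | last =>
    have h1 : Fin.last n ∉ ((thresholdGraph n (fun k => T k.castSucc)).neighborFinset i).map
        Fin.castSuccEmb := by
      simp only [Finset.mem_map, not_exists]
      intro a h
      exact (Fin.castSucc_lt_last a).ne h.2
    have hadj : (thresholdGraph (n+1) T).Adj i.castSucc (Fin.last n) ↔ T (Fin.last n) = true := by
      rw [tg_adj, max_eq_right (Fin.le_last _)]
      exact ⟨fun h => h.2, fun h => ⟨(Fin.castSucc_lt_last i).ne, h⟩⟩
    by_cases hT : T (Fin.last n) = true
    · simp [hT, SimpleGraph.mem_neighborFinset, hadj, h1]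
    · simp [hT, SimpleGraph.mem_neighborFinset, hadj, h1]
  | cast j =>
    have h2 : j.castSucc ∉ (if T (Fin.last n) = true then ({Fin.last n} : Finset (Fin (n+1))) else ∅) := by
      by_cases hT : T (Fin.last n) = true <;>
        simp [hT, (Fin.castSucc_lt_last j).ne]
    simp only [Finset.mem_union, SimpleGraph.mem_neighborFinset, Finset.mem_map, h2, false_or]
    constructor
    · intro h
      exact ⟨j, (adj_castSucc T i j).2 h, rfl⟩
    · rintro ⟨a, ha, hak⟩
      have : a = j := Fin.castSucc_inj.1 hak
      subst this
      exact (adj_castSucc T i a).1 ha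

lemma disj_aux {n : ℕ} (T : Fin (n+1) → Bool) (s : Finset (Fin n)) :
    Disjoint (if T (Fin.last n) = true then ({Fin.last n} : Finset (Fin (n+1))) else ∅)
      (s.map Fin.castSuccEmb) := by
  by_cases hT : T (Fin.last n) = true
  · simp only [hT, if_true]
    rw [Finset.disjoint_singleton_left]
    simp only [Finset.mem_map, not_exists]
    intro a h
    exact (Fin.castSucc_lt_last a).ne h.2
  · simp [hT]

lemma degree_castSucc {n : ℕ} (T : Fin (n+1) → Bool) (i : Fin n) :
    (thresholdGraph (n+1) T).degree i.castSucc
      = (thresholdGraph n (fun k => T k.castSucc)).degree i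
        + (if T (Fin.last n) = true then 1 else 0) := by
  rw [SimpleGraph.degree, neighborFinset_castSucc,
    Finset.card_union_of_disjoint (disj_aux T _), Finset.card_map]
  rw [SimpleGraph.degree, add_comm]
  congr 1
  by_cases hT : T (Fin.last n) = true <;> simp [hT]

lemma sum_neighbors_castSucc {n : ℕ} (T : Fin (n+1) → Bool) (v : Fin (n+1) → ℝ) (i : Fin n) :
    ∑ j ∈ (thresholdGraph (n+1) T).neighborFinset i.castSucc, v j
      = (∑ j ∈ (thresholdGraph n (fun k => T k.castSucc)).neighborFinset i, v j.castSucc)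
        + (if T (Fin.last n) = true then v (Fin.last n) else 0) := by
  rw [neighborFinset_castSucc, Finset.sum_union (disj_aux T _), Finset.sum_map]
  by_cases hT : T (Fin.last n) = true <;> simp [hT, add_comm] <;>
    exact Finset.sum_congr rfl fun x _ => rfl

lemma neighborFinset_last_of_true {n : ℕ} (T : Fin (n+1) → Bool) (hT : T (Fin.last n) = true) :
    (thresholdGraph (n+1) T).neighborFinset (Fin.last n) = Finset.univ.erase (Fin.last n) := by
  ext j
  rw [SimpleGraph.mem_neighborFinset, tg_adj, max_eq_left (Fin.le_last j),
    Finset.mem_erase]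
  constructor
  · rintro ⟨h1, _⟩; exact ⟨h1.symm, Finset.mem_univ _⟩
  · rintro ⟨h1, _⟩; exact ⟨h1.symm, hT⟩

lemma neighborFinset_last_of_false {n : ℕ} (T : Fin (n+1) → Bool) (hT : T (Fin.last n) = false) :
    (thresholdGraph (n+1) T).neighborFinset (Fin.last n) = ∅ := by
  ext j
  rw [SimpleGraph.mem_neighborFinset, tg_adj, max_eq_left (Fin.le_last j)]
  simp [hT]

end ThGAux

namespace ThGAux

lemma nf_filter {n : ℕ} (T : Fin n → Bool) (i : Fin n) :
    (thresholdGraph n T).neighborFinset i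
      = (univ.erase i).filter (fun j => T (max i j) = true) := by
  ext j
  rw [SimpleGraph.mem_neighborFinset, tg_adj, Finset.mem_filter, Finset.mem_erase]
  constructor
  · rintro ⟨h1, h2⟩
    exact ⟨⟨h1.symm, Finset.mem_univ _⟩, h2⟩
  · rintro ⟨⟨h1, _⟩, h2⟩
    exact ⟨h1.symm, h2⟩

lemma nf_compl_filter {n : ℕ} (T : Fin n → Bool) (i : Fin n) :
    (thresholdGraph n (fun k => !T k)).neighborFinset i
      = (univ.erase i).filter (fun j => ¬ (T (max i j) = true)) := by
  rw [nf_filter]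
  apply Finset.filter_congr
  intro j _
  simp

lemma deg_add_deg_compl {n : ℕ} (T : Fin n → Bool) (i : Fin n) :
    (thresholdGraph n T).degree i + (thresholdGraph n (fun k => !T k)).degree i = n - 1 := by
  rw [SimpleGraph.degree, SimpleGraph.degree, nf_filter, nf_compl_filter,
    Finset.card_filter_add_card_filter_not,
    Finset.card_erase_of_mem (Finset.mem_univ i), Finset.card_univ, Fintype.card_fin]

lemma sum_nbr_add_sum_nbr_compl {n : ℕ} (T : Fin n → Bool) (i : Fin n) (v : Fin n → ℝ) :
    (∑ j ∈ (thresholdGraph n T).neighborFinset i, v j)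
      + (∑ j ∈ (thresholdGraph n (fun k => !T k)).neighborFinset i, v j)
      = (∑ j, v j) - v i := by
  rw [nf_filter, nf_compl_filter, Finset.sum_filter_add_sum_filter_not,
    Finset.sum_erase_eq_sub (Finset.mem_univ i)]

lemma mainC : ∀ (n : ℕ) (T : Fin n → Bool) (lam : ℝ) (v : Fin n → ℝ) (W : Finset (Fin n)),
    (thresholdGraph n T).lapMatrix ℝ *ᵥ v = lam • v →
    (∀ i, i ∉ W → v i = 0) →
    (∀ w w', w ∈ W → w' ∈ W →
      (thresholdGraph n T).degree w = (thresholdGraph n T).degree w' → w = w') →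
    (∑ i, v i = 0) → v = 0 := by
  intro n
  induction n with
  | zero =>
    intro T lam v W _ _ _ _
    funext i
    exact i.elim0
  | succ n ih =>
    intro T lam v W hv hoff hinj hsum
    have hva : ∀ i, ((thresholdGraph (n+1) T).degree i : ℝ) * v i
        - ∑ j ∈ (thresholdGraph (n+1) T).neighborFinset i, v j = lam * v i := by
      intro i
      rw [← tg_lap_apply, hv]
      rfl
    by_cases hlam0 : lam = 0
    · subst hlam0
      exact lemA T v W (by rw [hv, zero_smul]) hoff hinj hsum
    obtain ⟨c, hcT⟩ : ∃ c : ℕ, (if T (Fin.last n) = true then (1:ℕ) else 0) = c := ⟨_, rfl⟩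
    have hpeel : v (Fin.last n) = 0 → v = 0 := by
      intro hvz
      have hv' : (thresholdGraph n (fun k => T k.castSucc)).lapMatrix ℝ
          *ᵥ (fun i => v i.castSucc)
          = (lam - (c:ℝ)) • (fun i => v i.castSucc) := by
        funext i
        rw [tg_lap_apply]
        have h := hva i.castSucc
        rw [degree_castSucc, sum_neighbors_castSucc, hcT] at h
        have hif : (if T (Fin.last n) = true then v (Fin.last n) else 0) = 0 := by
          split_ifs
          · exact hvz
          · rfl
        rw [hif, add_zero] at h
        push_cast at h ⊢
        show _ = (lam - (c:ℝ)) * v i.castSucc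
        linear_combination h
      have hoff' : ∀ i : Fin n, i ∉ univ.filter (fun i : Fin n => i.castSucc ∈ W) →
          v i.castSucc = 0 := fun i hi =>
        hoff _ (fun hmem => hi (Finset.mem_filter.2 ⟨Finset.mem_univ _, hmem⟩))
      have hinj' : ∀ w w', w ∈ univ.filter (fun i : Fin n => i.castSucc ∈ W) →
          w' ∈ univ.filter (fun i : Fin n => i.castSucc ∈ W) →
          (thresholdGraph n (fun k => T k.castSucc)).degree w
            = (thresholdGraph n (fun k => T k.castSucc)).degree w' → w = w' := by
        intro w w' hw hw' hd
        have hbig : (thresholdGraph (n+1) T).degree w.castSucc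
            = (thresholdGraph (n+1) T).degree w'.castSucc := by
          rw [degree_castSucc, degree_castSucc, hd]
        exact Fin.castSucc_inj.1
          (hinj _ _ (Finset.mem_filter.1 hw).2 (Finset.mem_filter.1 hw').2 hbig)
      have hsum' : ∑ i : Fin n, v i.castSucc = 0 := by
        have h2 : (∑ i : Fin n, v i.castSucc) + v (Fin.last n) = 0 := by
          rw [← Fin.sum_univ_castSucc]
          exact hsum
        rw [hvz, add_zero] at h2
        exact h2
      have hz := ih (fun k => T k.castSucc) (lam - (c:ℝ)) (fun i => v i.castSucc)
        (univ.filter (fun i : Fin n => i.castSucc ∈ W)) hv' hoff' hinj' hsum'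
      funext i
      induction i using Fin.lastCases with
      | last => exact hvz
      | cast j => exact congrFun hz j
    by_cases hTz : T (Fin.last n) = true
    · by_cases hlamn : lam = (n:ℝ) + 1
      · -- complement argument
        have hker : (thresholdGraph (n+1) (fun k => !T k)).lapMatrix ℝ *ᵥ v = 0 := by
          funext i
          rw [tg_lap_apply]
          have hsplit := sum_nbr_add_sum_nbr_compl T i v
          rw [hsum] at hsplit
          have hdeg := deg_add_deg_compl T i
          have hdeg' : (thresholdGraph (n+1) T).degree i
              + (thresholdGraph (n+1) (fun k => !T k)).degree i = n := by omega
          have hdegR : ((thresholdGraph (n+1) T).degree i : ℝ)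
              + ((thresholdGraph (n+1) (fun k => !T k)).degree i : ℝ) = n := by
            exact_mod_cast hdeg'
          have h := hva i
          rw [hlamn] at h
          show _ = (0 : Fin (n+1) → ℝ) i
          simp only [Pi.zero_apply]
          linear_combination v i * hdegR - hsplit - h
        have hinjc : ∀ w w', w ∈ W → w' ∈ W →
            (thresholdGraph (n+1) (fun k => !T k)).degree w
              = (thresholdGraph (n+1) (fun k => !T k)).degree w' → w = w' := by
          intro w w' hw hw' hd
          apply hinj w w' hw hw'
          have h1 := deg_add_deg_compl T w
          have h2 := deg_add_deg_compl T w'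
          omega
        exact lemA _ v W hker hoff hinjc hsum
      · apply hpeel
        have h := hva (Fin.last n)
        have hd : (thresholdGraph (n+1) T).degree (Fin.last n) = n := by
          rw [SimpleGraph.degree, neighborFinset_last_of_true T hTz,
            Finset.card_erase_of_mem (Finset.mem_univ _), Finset.card_univ, Fintype.card_fin]
          omega
        rw [hd, neighborFinset_last_of_true T hTz,
          Finset.sum_erase_eq_sub (Finset.mem_univ _), hsum] at h
        have hz : (lam - ((n:ℝ)+1)) * v (Fin.last n) = 0 := by linear_combination -h
        rcases mul_eq_zero.1 hz with h0 | h0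
        · exact absurd (by linarith : lam = (n:ℝ)+1) hlamn
        · exact h0
    · apply hpeel
      have h := hva (Fin.last n)
      have hTz' : T (Fin.last n) = false := by simpa using hTz
      have hd : (thresholdGraph (n+1) T).degree (Fin.last n) = 0 := by
        rw [SimpleGraph.degree, neighborFinset_last_of_false T hTz', Finset.card_empty]
      rw [hd, neighborFinset_last_of_false T hTz', Finset.sum_empty] at h
      have hz : lam * v (Fin.last n) = 0 := by push_cast at h; linarith
      exact (mul_eq_zero.1 hz).resolve_left hlam0

end ThGAux

/-- let `W` contain exactly one vertex of each distinct degree value of a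
connected threshold graph and let the control set be `S = V \ W`. Then every nonzero
eigenvector of the Laplacian is nonzero at some control node, i.e. (by the PBH test) the
Laplacian network controlled from `S` is controllable. -/
theorem thresholdGraph_controllable_from_complement (n : ℕ) (T : Fin n → Bool) (hn : 2 ≤ n)
    (hT1 : T ⟨0, lt_of_lt_of_le two_pos hn⟩ = false)
    (hconn : (thresholdGraph n T).Connected)
    (W : Finset (Fin n))
    (hW : ∀ i : Fin n, ∃! w : Fin n, w ∈ W ∧
      (thresholdGraph n T).degree w = (thresholdGraph n T).degree i)
    (lam : ℝ) (v : Fin n → ℝ) (hv0 : v ≠ 0)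
    (hv : (thresholdGraph n T).lapMatrix ℝ *ᵥ v = lam • v) :
    ∃ j : Fin n, j ∉ W ∧ v j ≠ 0 := by
  classical
  have hinjW : ∀ w w', w ∈ W → w' ∈ W →
      (thresholdGraph n T).degree w = (thresholdGraph n T).degree w' → w = w' := by
    intro w w' hw hw' hd
    obtain ⟨u, -, hu⟩ := hW w'
    exact (hu w ⟨hw, hd⟩).trans (hu w' ⟨hw', rfl⟩).symm
  by_cases hlam0 : lam = 0
  · have hker : (thresholdGraph n T).lapMatrix ℝ *ᵥ v = 0 := by
      rw [hv, hlam0, zero_smul]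
    have hcon := ThGAux.ker_const _ hker
    obtain ⟨i0, hi0⟩ : ∃ i, v i ≠ 0 := by
      by_contra h
      push_neg at h
      exact hv0 (funext h)
    have hdegpos : ∀ i : Fin n, 0 < (thresholdGraph n T).degree i := by
      intro i
      rw [SimpleGraph.degree_pos_iff_exists_adj]
      obtain ⟨j, hj⟩ : ∃ j : Fin n, j ≠ i := by
        have h1 : 1 < Fintype.card (Fin n) := by rw [Fintype.card_fin]; omega
        exact Fintype.exists_ne_of_one_lt_card h1 i
      obtain ⟨w⟩ := hconn.preconnected i j
      cases w with
      | nil => exact absurd rfl hj.symm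
      | cons h p => exact ⟨_, h⟩
    have hmaps : ∀ a ∈ (univ : Finset (Fin n)),
        (thresholdGraph n T).degree a ∈ Finset.Icc 1 (n-1) := by
      intro a _
      rw [Finset.mem_Icc]
      have h1 := (thresholdGraph n T).degree_lt_card_verts a
      rw [Fintype.card_fin] at h1
      exact ⟨hdegpos a, by omega⟩
    have hlt : (Finset.Icc 1 (n-1)).card < (univ : Finset (Fin n)).card := by
      rw [Nat.card_Icc, Finset.card_univ, Fintype.card_fin]
      omega
    obtain ⟨a, -, b, -, hab, hdeg⟩ :=
      Finset.exists_ne_map_eq_of_card_lt_of_maps_to hlt hmaps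
    have hor : a ∉ W ∨ b ∉ W := by
      by_contra hc
      push_neg at hc
      exact hab (hinjW a b hc.1 hc.2 hdeg)
    rcases hor with hj | hj
    · exact ⟨a, hj, by rw [hcon a i0 (hconn.preconnected a i0)]; exact hi0⟩
    · exact ⟨b, hj, by rw [hcon b i0 (hconn.preconnected b i0)]; exact hi0⟩
  · by_contra hc
    push_neg at hc
    have hsum : ∑ i, v i = 0 := by
      have h1 : ∑ i, ((thresholdGraph n T).lapMatrix ℝ *ᵥ v) i = 0 :=
        ThGAux.sum_lap_mulVec _ v
      rw [hv] at h1
      simp only [Pi.smul_apply, smul_eq_mul, ← Finset.mul_sum] at h1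
      exact (mul_eq_zero.1 h1).resolve_left hlam0
    exact hv0 (ThGAux.mainC n T lam v W hv hc hinjW hsum)
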